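/- arXiv:1407.3037 — 4 statements merged into one kernel-verified Lean document; each statement's English description precedes it below -/
import Mathlib

section
/- (Fourier slice theorem, used to show T_0 = B_Φ K R and T_1 = L_Φ K R.) Let f be a Schwartz function on ℝ² and θ a unit vector in ℝ². Then the function s ↦ Rf(θ,s) is integrable on ℝ, and for every τ ∈ ℝ one has (1/√(2π)) ∫_ℝ e^{-iτs} Rf(θ,s) ds = √(2π) · f̂(τθ). -/
open MeasureTheory Real Complex

/-- The Radon transform `Rf(θ,s) = ∫_ℝ f(sθ + tθ^⊥) dt`, with `θ^⊥` the rotation of `θ`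
counterclockwise by `π/2`. -/
noncomputable def Radon (f : SchwartzMap (ℝ × ℝ) ℂ) (θ : ℝ × ℝ) (s : ℝ) : ℂ :=
  ∫ t : ℝ, f (s • θ + t • (-θ.2, θ.1))

/-- The 2D Fourier transform `f̂(ξ) = (1/(2π)) ∫_{ℝ²} e^{-ix·ξ} f(x) dx`. -/
noncomputable def fourier2 (f : SchwartzMap (ℝ × ℝ) ℂ) (ξ : ℝ × ℝ) : ℂ :=
  (1 / (2 * (π : ℂ))) *
    ∫ x : ℝ × ℝ, Complex.exp (-(Complex.I * (x.1 * ξ.1 + x.2 * ξ.2))) * f x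

/-- rotation-like linear equiv -/
noncomputable def rotE (θ : ℝ × ℝ) (hθ : θ.1 ^ 2 + θ.2 ^ 2 = 1) : (ℝ × ℝ) ≃ₗ[ℝ] (ℝ × ℝ) where
  toFun p := (p.1 * θ.1 - p.2 * θ.2, p.1 * θ.2 + p.2 * θ.1)
  invFun p := (p.1 * θ.1 + p.2 * θ.2, -p.1 * θ.2 + p.2 * θ.1)
  map_add' a b := by ext <;> simp <;> ring
  map_smul' c a := by ext <;> simp <;> ring
  left_inv p := by
    ext
    · simp; linear_combination p.1 * hθ
    · simp; linear_combination p.2 * hθ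
  right_inv p := by
    ext
    · simp; linear_combination p.1 * hθ
    · simp; linear_combination p.2 * hθ

theorem rotE_det (θ : ℝ × ℝ) (hθ : θ.1 ^ 2 + θ.2 ^ 2 = 1) :
    LinearMap.det ((rotE θ hθ : (ℝ × ℝ) ≃ₗ[ℝ] (ℝ × ℝ)) : (ℝ × ℝ) →ₗ[ℝ] (ℝ × ℝ)) = 1 := by
  rw [← LinearMap.det_toMatrix (Module.Basis.finTwoProd ℝ), Matrix.det_fin_two]
  simp [LinearMap.toMatrix_apply, rotE, Module.Basis.finTwoProd]
  nlinarith [hθ]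

theorem rotE_mp (θ : ℝ × ℝ) (hθ : θ.1 ^ 2 + θ.2 ^ 2 = 1) :
    MeasurePreserving (rotE θ hθ) volume volume := by
  have hd := rotE_det θ hθ
  constructor
  · exact (rotE θ hθ).toContinuousLinearEquiv.continuous.measurable
  · have := Measure.map_linearMap_addHaar_eq_smul_addHaar (E := ℝ × ℝ) volume
      (f := ((rotE θ hθ : (ℝ × ℝ) ≃ₗ[ℝ] (ℝ × ℝ)) : (ℝ × ℝ) →ₗ[ℝ] (ℝ × ℝ))) (by rw [hd]; norm_num)
    simpa [hd] using this

/-- Fourier slice theorem: for Schwartz `f` and a unit vector `θ`, the function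
`s ↦ Rf(θ,s)` is integrable, and
`(1/√(2π)) ∫_ℝ e^{-iτs} Rf(θ,s) ds = √(2π) · f̂(τθ)` for every `τ`. -/
theorem stmt_0 (f : SchwartzMap (ℝ × ℝ) ℂ) (θ : ℝ × ℝ) (hθ : θ.1 ^ 2 + θ.2 ^ 2 = 1) :
    Integrable (fun s : ℝ => Radon f θ s) ∧
    ∀ τ : ℝ,
      (1 / (Real.sqrt (2 * π) : ℂ)) *
          ∫ s : ℝ, Complex.exp (-(Complex.I * τ * s)) * Radon f θ s
        = (Real.sqrt (2 * π) : ℂ) * fourier2 f (τ • θ) := by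
  set e := rotE θ hθ with he
  have hemb : MeasurableEmbedding (e : (ℝ × ℝ) → (ℝ × ℝ)) :=
    e.toContinuousLinearEquiv.toHomeomorph.measurableEmbedding
  have hmp := rotE_mp θ hθ
  have hcomp : ∀ s t : ℝ, s • θ + t • (-θ.2, θ.1) = e (s, t) := by
    intro s t; ext <;> simp [he, rotE] <;> ring
  have hfi : Integrable (fun p : ℝ × ℝ => f (e p)) volume :=
    (hmp.integrable_comp_emb hemb).2 f.integrable
  have hfi' : Integrable (fun p : ℝ × ℝ => f (e p)) (volume.prod volume) := by
    rwa [← Measure.volume_eq_prod]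
  have hint : Integrable (fun s : ℝ => Radon f θ s) := by
    have := hfi'.integral_prod_left
    simpa only [Radon, hcomp] using this
  refine ⟨hint, fun τ => ?_⟩
  -- the phase identity
  have hphase : ∀ p : ℝ × ℝ,
      Complex.exp (-(Complex.I * τ * p.1)) =
      Complex.exp (-(Complex.I * ((e p).1 * (τ • θ).1 + (e p).2 * (τ • θ).2))) := by
    intro p
    have h1 : ((e p).1 * (τ • θ).1 + (e p).2 * (τ • θ).2 : ℝ) = τ * p.1 := by
      simp [he, rotE]
      linear_combination (τ * p.1) * hθ
    congr 1
    calc -(Complex.I * τ * p.1) = -(Complex.I * ((τ * p.1 : ℝ) : ℂ)) := by push_cast; ring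
      _ = -(Complex.I * (((e p).1 * (τ • θ).1 + (e p).2 * (τ • θ).2 : ℝ) : ℂ)) := by rw [h1]
      _ = -(Complex.I * ((e p).1 * (τ • θ).1 + (e p).2 * (τ • θ).2)) := by push_cast; ring
  -- integrand on the product
  set G : (ℝ × ℝ) → ℂ := fun x =>
    Complex.exp (-(Complex.I * (x.1 * (τ • θ).1 + x.2 * (τ • θ).2))) * f x with hG
  have hGint : Integrable G volume := by
    apply f.integrable.bdd_mul (c := 1)
    · apply Continuous.aestronglyMeasurable
      continuity
    · refine Filter.Eventually.of_forall (fun x => ?_)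
      rw [Complex.norm_exp]
      have : (-(Complex.I * (x.1 * (τ • θ).1 + x.2 * (τ • θ).2))).re = 0 := by simp
      rw [this]; norm_num
  have hGcomp : Integrable (fun p : ℝ × ℝ => G (e p)) (volume.prod volume) := by
    rw [← Measure.volume_eq_prod]
    exact (hmp.integrable_comp_emb hemb).2 hGint
  have key : (∫ s : ℝ, Complex.exp (-(Complex.I * τ * s)) * Radon f θ s) = ∫ x, G x := by
    have h1 : (∫ s : ℝ, Complex.exp (-(Complex.I * τ * s)) * Radon f θ s)
        = ∫ s : ℝ, ∫ t : ℝ, G (e (s, t)) := by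
      congr 1; ext s
      rw [Radon]
      rw [← integral_const_mul]
      congr 1; ext t
      rw [hcomp s t, hG]
      rw [hphase (s, t)]
    rw [h1, integral_integral hGcomp]
    simp only [Prod.mk.eta]
    rw [← Measure.volume_eq_prod]
    exact hmp.integral_comp hemb G
  rw [key]
  have hGval : fourier2 f (τ • θ) = (1 / (2 * (π : ℂ))) * ∫ x, G x := rfl
  rw [hGval]
  have h2π : (2 * (π : ℂ)) ≠ 0 := by
    simp [Complex.ext_iff, Real.pi_ne_zero]
  have hne : (Real.sqrt (2 * π) : ℂ) ≠ 0 := by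
    norm_cast
    positivity
  have hsq : ((Real.sqrt (2 * π) : ℂ)) * (Real.sqrt (2 * π) : ℂ) = 2 * (π : ℂ) := by
    rw [← Complex.ofReal_mul, Real.mul_self_sqrt (by positivity : (0:ℝ) ≤ 2 * π)]
    push_cast; ring
  have h : (1 : ℂ) / (Real.sqrt (2 * π) : ℂ) = (Real.sqrt (2 * π) : ℂ) / (2 * (π : ℂ)) := by
    rw [div_eq_div_iff hne h2π, one_mul, hsq]
  rw [h]; ring
end

section
/- (Decay of one-sided oscillatory integrals with amplitude vanishing to order k at 0.) Let g : ℝ → ℂ be smooth with compact support and let k be a natural number such that g^{(l)}(0) = 0 for all 0 ≤ l ≤ k-1. Then there exists a constant C such that for all c ∈ ℝ, | ∫_0^∞ e^{icτ} g(τ) dτ | ≤ C (1 + |c|)^{-(k+1)}. -/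
open MeasureTheory Real Complex Filter

noncomputable def J (c : ℝ) (h : ℝ → ℂ) : ℂ :=
  ∫ τ in Set.Ioi (0 : ℝ), Complex.exp (Complex.I * c * τ) * h τ

lemma integ (c : ℝ) (h : ℝ → ℂ) (hcont : Continuous h) (hc : HasCompactSupport h) :
    Integrable (fun τ : ℝ => Complex.exp (Complex.I * c * τ) * h τ) := by
  apply Continuous.integrable_of_hasCompactSupport
  · exact (Complex.continuous_exp.comp (by continuity)).mul hcont
  · exact hc.mul_left

lemma exp_norm (c τ : ℝ) : ‖Complex.exp (Complex.I * c * τ)‖ = 1 := by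
  rw [Complex.norm_exp]
  simp [Complex.mul_re]

lemma Jbound (c : ℝ) (h : ℝ → ℂ) (hcont : Continuous h) (hc : HasCompactSupport h) :
    ‖J c h‖ ≤ ∫ τ : ℝ, ‖h τ‖ := by
  calc ‖J c h‖ ≤ ∫ τ in Set.Ioi (0:ℝ), ‖Complex.exp (Complex.I * c * τ) * h τ‖ :=
        norm_integral_le_integral_norm _
    _ = ∫ τ in Set.Ioi (0:ℝ), ‖h τ‖ := by
        congr 1; ext τ; rw [norm_mul, exp_norm, one_mul]
    _ ≤ ∫ τ : ℝ, ‖h τ‖ := by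
        apply setIntegral_le_integral (hcont.norm.integrable_of_hasCompactSupport hc.norm)
        filter_upwards with x using norm_nonneg _

lemma step (h : ℝ → ℂ) (hh : ContDiff ℝ (⊤ : ℕ∞) h) (hc : HasCompactSupport h) (c : ℝ) :
    (Complex.I * c) * J c h + J c (deriv h) = -h 0 := by
  have hd : Continuous (deriv h) := (hh.iterate_deriv 1).continuous
  have hder : ∀ x ∈ Set.Ioi (0:ℝ), HasDerivAt (fun τ : ℝ => Complex.exp (Complex.I * c * τ) * h τ)
      ((Complex.I * c) * Complex.exp (Complex.I * c * x) * h x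
        + Complex.exp (Complex.I * c * x) * deriv h x) x := by
    intro x _
    have h1 : HasDerivAt (fun τ : ℝ => Complex.exp (Complex.I * c * τ))
        ((Complex.I * c) * Complex.exp (Complex.I * c * x)) x := by
      have : HasDerivAt (fun z : ℂ => Complex.exp (Complex.I * c * z))
          (Complex.exp (Complex.I * c * x) * (Complex.I * c)) (x : ℂ) :=
        by simpa [mul_comm] using ((hasDerivAt_id (x:ℂ)).const_mul (Complex.I * c)).cexp
      simpa [mul_comm] using this.comp_ofReal
    exact h1.mul ((hh.differentiable (by simp) x).hasDerivAt)
  have hzero : Tendsto (fun τ : ℝ => Complex.exp (Complex.I * c * τ) * h τ) atTop (nhds 0) := by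
    have : (fun τ : ℝ => Complex.exp (Complex.I * c * τ) * h τ) =ᶠ[atTop] 0 := by
      obtain ⟨R, hR⟩ := hc.isCompact.isBounded.subset_closedBall 0
      filter_upwards [eventually_gt_atTop R] with x hx
      have hx0 : h x = 0 := by
        by_contra hne
        have := hR (subset_tsupport h hne)
        simp only [Metric.mem_closedBall, Real.dist_eq, sub_zero] at this
        exact absurd (le_trans (le_abs_self x) this) (not_le.mpr hx)
      simp [hx0]
    exact Tendsto.congr' this.symm tendsto_const_nhds
  have i1 := integ c h hh.continuous hc
  have i2 := integ c (deriv h) hd hc.deriv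
  have key := integral_Ioi_of_hasDerivAt_of_tendsto
    (a := (0:ℝ)) (m := (0:ℂ))
    (((Complex.continuous_exp.comp (by continuity)).mul hh.continuous).continuousWithinAt)
    hder ((((i1.const_mul (Complex.I * c)).add i2).congr
      (Filter.Eventually.of_forall fun x => by simp only [Pi.add_apply]; ring)).integrableOn) hzero
  have expand : ∫ x in Set.Ioi (0:ℝ), ((Complex.I * c) * Complex.exp (Complex.I * c * x) * h x
        + Complex.exp (Complex.I * c * x) * deriv h x)
      = (Complex.I * c) * J c h + J c (deriv h) := by
    have e1 : (fun x : ℝ => (Complex.I * c) * Complex.exp (Complex.I * c * x) * h x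
        + Complex.exp (Complex.I * c * x) * deriv h x)
        = fun x : ℝ => (Complex.I * c) * (Complex.exp (Complex.I * c * x) * h x)
        + Complex.exp (Complex.I * c * x) * deriv h x := by ext x; ring
    rw [show (∫ x in Set.Ioi (0:ℝ), ((Complex.I * c) * Complex.exp (Complex.I * c * x) * h x
        + Complex.exp (Complex.I * c * x) * deriv h x)) = ∫ x in Set.Ioi (0:ℝ),
        ((Complex.I * c) * (Complex.exp (Complex.I * c * x) * h x)
        + Complex.exp (Complex.I * c * x) * deriv h x) from by rw [e1],
      MeasureTheory.integral_add ((i1.const_mul _).integrableOn) i2.integrableOn,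
      MeasureTheory.integral_const_mul]
    rfl
  rw [expand] at key
  rw [key]; simp

lemma hcs_iter (h : ℝ → ℂ) (hc : HasCompactSupport h) (n : ℕ) :
    HasCompactSupport (deriv^[n] h) := by
  induction n with
  | zero => exact hc
  | succ n ih => rw [Function.iterate_succ_apply']; exact ih.deriv

lemma key : ∀ (k : ℕ) (g : ℝ → ℂ), ContDiff ℝ (⊤ : ℕ∞) g → HasCompactSupport g →
    (∀ l < k, iteratedDeriv l g 0 = 0) → ∀ c : ℝ,
    (Complex.I * c) ^ (k+1) * J c g
      = (-1)^(k+1) * (deriv^[k] g 0) + (-1)^(k+1) * J c (deriv^[k+1] g) := by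
  intro k
  induction k with
  | zero =>
    intro g hg hgc _ c
    have := step g hg hgc c
    have e : deriv^[0+1] g = deriv g := by norm_num
    rw [e]
    simp only [pow_one, Function.iterate_zero_apply]
    linear_combination this
  | succ k ih =>
    intro g hg hgc hvan c
    have hg0 : g 0 = 0 := by simpa [iteratedDeriv_zero] using hvan 0 (Nat.succ_pos k)
    have hstep := step g hg hgc c
    have hJ : (Complex.I * c) * J c g = -J c (deriv g) := by
      rw [hg0] at hstep; linear_combination hstep
    have hd : ContDiff ℝ (⊤ : ℕ∞) (deriv g) := by
      simpa using hg.iterate_deriv 1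
    have hvan' : ∀ l < k, iteratedDeriv l (deriv g) 0 = 0 := by
      intro l hl
      rw [← iteratedDeriv_succ']
      exact hvan (l+1) (by omega)
    have := ih (deriv g) hd hgc.deriv hvan' c
    have e1 : deriv^[k] (deriv g) = deriv^[k+1] g := (Function.iterate_succ_apply deriv k g).symm
    have e2 : deriv^[k+1] (deriv g) = deriv^[k+2] g :=
      (Function.iterate_succ_apply deriv (k+1) g).symm
    rw [e1, e2] at this
    calc (Complex.I * c) ^ (k+2) * J c g
        = (Complex.I * c) ^ (k+1) * ((Complex.I * c) * J c g) := by ring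
      _ = (Complex.I * c) ^ (k+1) * (-J c (deriv g)) := by rw [hJ]
      _ = -((Complex.I * c) ^ (k+1) * J c (deriv g)) := by ring
      _ = -((-1)^(k+1) * (deriv^[k+1] g 0) + (-1)^(k+1) * J c (deriv^[k+2] g)) := by rw [this]
      _ = (-1)^(k+2) * (deriv^[k+1] g 0) + (-1)^(k+2) * J c (deriv^[k+2] g) := by ring


/-- Decay of one-sided oscillatory integrals with amplitude vanishing to order `k` at `0`:
if `g` is smooth, compactly supported and `g^{(l)}(0) = 0` for `0 ≤ l ≤ k-1`, then
`|∫_0^∞ e^{icτ} g(τ) dτ| ≤ C (1+|c|)^{-(k+1)}`. -/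
theorem stmt_7 (g : ℝ → ℂ) (hg : ContDiff ℝ (⊤ : ℕ∞) g) (hgc : HasCompactSupport g)
    (k : ℕ) (hvan : ∀ l < k, iteratedDeriv l g 0 = 0) :
    ∃ C : ℝ, ∀ c : ℝ,
      ‖∫ τ in Set.Ioi (0 : ℝ), Complex.exp (Complex.I * c * τ) * g τ‖
        ≤ C * ((1 + |c|) ^ (k + 1))⁻¹ := by
  set M1 : ℝ := ‖deriv^[k] g 0‖ + ∫ τ : ℝ, ‖deriv^[k+1] g τ‖ with hM1
  set M0 : ℝ := ∫ τ : ℝ, ‖g τ‖ with hM0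
  have hM0nn : 0 ≤ M0 := integral_nonneg fun x => norm_nonneg _
  have hM1nn : 0 ≤ M1 := add_nonneg (norm_nonneg _) (integral_nonneg fun x => norm_nonneg _)
  refine ⟨2^(k+1) * max M1 M0, fun c => ?_⟩
  have hJg : (∫ τ in Set.Ioi (0 : ℝ), Complex.exp (Complex.I * c * τ) * g τ) = J c g := rfl
  rw [hJg]
  have hPpos : (0:ℝ) < (1 + |c|) ^ (k+1) := by positivity
  rw [← div_eq_mul_inv, le_div_iff₀ hPpos]
  have hd1 : ContDiff ℝ (⊤ : ℕ∞) (deriv^[k+1] g) := hg.iterate_deriv (k+1)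
  rcases le_total (|c|) 1 with hc1 | hc1
  · have b1 : ‖J c g‖ ≤ M0 := Jbound c g hg.continuous hgc
    have b2 : (1 + |c|)^(k+1) ≤ 2^(k+1) := by
      apply pow_le_pow_left₀ (by positivity)
      linarith
    calc ‖J c g‖ * (1 + |c|)^(k+1) ≤ M0 * 2^(k+1) :=
          mul_le_mul b1 b2 (le_of_lt hPpos) hM0nn
      _ ≤ 2^(k+1) * max M1 M0 := by
          rw [mul_comm]
          exact mul_le_mul_of_nonneg_left (le_max_right _ _) (by positivity)
  · have hkey := key k g hg hgc hvan c
    have hnorm : |c|^(k+1) * ‖J c g‖ ≤ M1 := by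
      have : ‖(Complex.I * c) ^ (k+1) * J c g‖ = |c|^(k+1) * ‖J c g‖ := by
        rw [norm_mul, norm_pow, norm_mul, Complex.norm_I, one_mul, Complex.norm_real,
          Real.norm_eq_abs]
      rw [← this, hkey]
      calc ‖(-1:ℂ)^(k+1) * (deriv^[k] g 0) + (-1:ℂ)^(k+1) * J c (deriv^[k+1] g)‖
          ≤ ‖(-1:ℂ)^(k+1) * (deriv^[k] g 0)‖ + ‖(-1:ℂ)^(k+1) * J c (deriv^[k+1] g)‖ :=
            norm_add_le _ _
        _ = ‖deriv^[k] g 0‖ + ‖J c (deriv^[k+1] g)‖ := by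
            rw [norm_mul, norm_mul, norm_pow, norm_neg, norm_one, one_pow, one_mul, one_mul]
        _ ≤ M1 := by
            exact add_le_add_right (Jbound c _ hd1.continuous (hcs_iter g hgc (k+1))) _
    have b2 : (1 + |c|)^(k+1) ≤ 2^(k+1) * |c|^(k+1) := by
      rw [← mul_pow]
      apply pow_le_pow_left₀ (by positivity)
      linarith
    calc ‖J c g‖ * (1 + |c|)^(k+1) ≤ ‖J c g‖ * (2^(k+1) * |c|^(k+1)) :=
          mul_le_mul_of_nonneg_left b2 (norm_nonneg _)
      _ = 2^(k+1) * (|c|^(k+1) * ‖J c g‖) := by ring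
      _ ≤ 2^(k+1) * M1 := mul_le_mul_of_nonneg_left hnorm (by positivity)
      _ ≤ 2^(k+1) * max M1 M0 := mul_le_mul_of_nonneg_left (le_max_left _ _) (by positivity)
end

section
/- (Principal-symbol asymptotics of the FIO amplitude in Proposition 4.1 b).) Let m ≥ 0 be a real number, k a natural number, and ρ : ℝ² \ {0} → ℂ smooth and homogeneous of degree 0 such that φ(τ) := ρ(1,τ) is compactly supported and φ^{(l)}(0) = 0 for all 0 ≤ l ≤ k-1. Then for every δ > 0 there exists a constant C such that for all ξ₁ > 0 and all s ∈ ℝ with |s| ≥ δ, | ∫_0^∞ e^{isξ₂} (ξ₁² + ξ₂²)^{m/2} ρ(ξ₁, ξ₂) dξ₂ − φ^{(k)}(0) · ξ₁^{m-k} / (-is)^{k+1} | ≤ C ξ₁^{m-k-1}. -/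
set_option maxHeartbeats 1000000

open MeasureTheory Real Complex Set Filter

lemma itd_add {f g : ℝ → ℂ} (hf : ContDiff ℝ (⊤ : ℕ∞) f) (hg : ContDiff ℝ (⊤ : ℕ∞) g) (n : ℕ) (x : ℝ) :
    iteratedDeriv n (fun y => f y + g y) x = iteratedDeriv n f x + iteratedDeriv n g x := by
  have : (fun y => f y + g y) = f + g := rfl
  simp only [iteratedDeriv_eq_iteratedFDeriv, this]
  rw [iteratedFDeriv_add_apply (hf.contDiffAt.of_le (by exact_mod_cast le_top)) (hg.contDiffAt.of_le (by exact_mod_cast le_top))]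
  rfl

lemma cd_deriv {f : ℝ → ℂ} (hf : ContDiff ℝ (⊤ : ℕ∞) f) : ContDiff ℝ (⊤ : ℕ∞) (deriv f) := by
  simpa using hf.iterate_deriv 1

lemma leibniz_vanish (k : ℕ) : ∀ (f g : ℝ → ℂ), ContDiff ℝ (⊤ : ℕ∞) f → ContDiff ℝ (⊤ : ℕ∞) g →
    (∀ j < k, iteratedDeriv j f 0 = 0) →
    (∀ j < k, iteratedDeriv j (fun x => g x * f x) 0 = 0) ∧
      iteratedDeriv k (fun x => g x * f x) 0 = g 0 * iteratedDeriv k f 0 := by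
  induction k with
  | zero => intro f g hf hg hv; exact ⟨fun j hj => absurd hj (Nat.not_lt_zero j), by simp⟩
  | succ k ih =>
    intro f g hf hg hv
    have hderiv : deriv (fun x => g x * f x) =
        fun x => deriv g x * f x + g x * deriv f x := by
      funext x
      exact deriv_fun_mul (hg.differentiable (by simp) x) (hf.differentiable (by simp) x)
    have hf' : ContDiff ℝ (⊤ : ℕ∞) (deriv f) := cd_deriv hf
    have hg' : ContDiff ℝ (⊤ : ℕ∞) (deriv g) := cd_deriv hg
    have hvf' : ∀ j < k, iteratedDeriv j (deriv f) 0 = 0 := by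
      intro j hj
      rw [← iteratedDeriv_succ']
      exact hv (j+1) (Nat.succ_lt_succ hj)
    have h1 := ih (deriv f) g hf' hg hvf'
    have h2 := ih f (deriv g) hf hg' (fun j hj => hv j (hj.trans (Nat.lt_succ_self k)))
    have key : ∀ j ≤ k, iteratedDeriv (j+1) (fun x => g x * f x) 0 =
        iteratedDeriv j (fun x => deriv g x * f x) 0 +
        iteratedDeriv j (fun x => g x * deriv f x) 0 := by
      intro j hj
      rw [iteratedDeriv_succ', hderiv]
      exact itd_add (hg'.mul hf) (hg.mul hf') j 0
    constructor
    · intro j hj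
      match j with
      | 0 =>
        simp only [iteratedDeriv_zero]
        have := hv 0 (Nat.succ_pos k); simp only [iteratedDeriv_zero] at this
        simp [this]
      | (j+1) =>
        have hjk : j < k := Nat.lt_of_succ_lt_succ hj
        rw [key j hjk.le, h2.1 j hjk, h1.1 j hjk, add_zero]
    · rw [key k le_rfl, h2.2, h1.2, ← iteratedDeriv_succ']
      have : iteratedDeriv k f 0 = 0 := hv k (Nat.lt_succ_self k)
      simp [this]

lemma intble_exp_mul {lam : ℝ} {h : ℝ → ℂ} (hs : Continuous h) (hc : HasCompactSupport h) :
    IntegrableOn (fun τ : ℝ => Complex.exp (Complex.I * lam * τ) * h τ) (Ioi 0) := by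
  have hcs : HasCompactSupport (fun τ : ℝ => Complex.exp (Complex.I * lam * τ) * h τ) :=
    HasCompactSupport.mul_left hc
  exact (((Complex.continuous_exp.comp (by continuity)).mul hs).integrable_of_hasCompactSupport
    hcs).integrableOn

lemma ibp_step {lam : ℝ} (hlam : lam ≠ 0) {h : ℝ → ℂ} (hs : ContDiff ℝ (⊤ : ℕ∞) h)
    (hc : HasCompactSupport h) :
    ∫ τ in Ioi (0:ℝ), Complex.exp (Complex.I * lam * τ) * h τ
      = h 0 / (-(Complex.I * lam))
        + (∫ τ in Ioi (0:ℝ), Complex.exp (Complex.I * lam * τ) * deriv h τ)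
            / (-(Complex.I * lam)) := by
  have hdiff : Differentiable ℝ h := hs.differentiable (by simp)
  have hc' : HasCompactSupport (deriv h) := hc.deriv
  have hcontd : Continuous (deriv h) := hs.continuous_deriv (by exact_mod_cast le_top)
  have hF : ∀ x : ℝ, HasDerivAt (fun τ : ℝ => Complex.exp (Complex.I * lam * τ) * h τ)
      (Complex.I * lam * Complex.exp (Complex.I * lam * x) * h x
        + Complex.exp (Complex.I * lam * x) * deriv h x) x := by
    intro x
    have h1 : HasDerivAt (fun z : ℂ => Complex.exp (Complex.I * lam * z))
        (Complex.exp (Complex.I * lam * x) * (Complex.I * lam)) x := by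
      have := (Complex.hasDerivAt_exp (Complex.I * lam * x)).comp (x : ℂ)
        ((hasDerivAt_id (x : ℂ)).const_mul (Complex.I * lam))
      simpa [Function.comp_def, mul_comm] using this
    have := (h1.comp_ofReal).fun_mul (hdiff x).hasDerivAt
    exact this.congr_deriv (by ring)
  have htend : Tendsto (fun τ : ℝ => Complex.exp (Complex.I * lam * τ) * h τ) atTop (nhds 0) := by
    obtain ⟨R, hR0, hR⟩ := hc.exists_pos_le_norm
    have hev : (fun τ : ℝ => Complex.exp (Complex.I * lam * τ) * h τ) =ᶠ[atTop]
        fun _ => 0 := by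
      filter_upwards [eventually_ge_atTop R] with τ hτ
      rw [hR τ (by rw [Real.norm_eq_abs]; exact hτ.trans (le_abs_self τ)), mul_zero]
    exact tendsto_const_nhds.congr' hev.symm
  have hint1 : IntegrableOn (fun τ : ℝ => Complex.exp (Complex.I * lam * τ) * h τ) (Ioi 0) :=
    intble_exp_mul hs.continuous hc
  have hint2 : IntegrableOn (fun τ : ℝ => Complex.exp (Complex.I * lam * τ) * deriv h τ)
      (Ioi 0) := intble_exp_mul hcontd hc'
  have hint3 : IntegrableOn
      (fun τ : ℝ => Complex.I * lam * Complex.exp (Complex.I * lam * τ) * h τ) (Ioi 0) := by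
    simpa [mul_assoc, IntegrableOn] using hint1.const_mul (Complex.I * lam)
  have key := integral_Ioi_of_hasDerivAt_of_tendsto' (fun x _ => hF x) (hint3.add hint2) htend
  rw [integral_add hint3 hint2] at key
  simp only [Complex.ofReal_zero, mul_zero, Complex.exp_zero, one_mul, zero_sub] at key
  have key2 : Complex.I * lam * (∫ τ in Ioi (0:ℝ), Complex.exp (Complex.I * lam * τ) * h τ)
      + ∫ τ in Ioi (0:ℝ), Complex.exp (Complex.I * lam * τ) * deriv h τ = -h 0 := by
    rw [← MeasureTheory.integral_const_mul]
    simpa [mul_assoc] using key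
  have hne : Complex.I * lam ≠ 0 := by
    simp [Complex.I_ne_zero, Complex.ofReal_eq_zero, hlam]
  rw [← add_div, eq_div_iff (neg_ne_zero.mpr hne)]
  linear_combination (-1 : ℂ) * key2

lemma hcs_itd {h : ℝ → ℂ} (hc : HasCompactSupport h) (n : ℕ) :
    HasCompactSupport (iteratedDeriv n h) := by
  induction n with
  | zero => simpa using hc
  | succ n ih => rw [iteratedDeriv_succ]; exact ih.deriv

lemma cd_itd {h : ℝ → ℂ} (hs : ContDiff ℝ (⊤ : ℕ∞) h) (n : ℕ) :
    ContDiff ℝ (⊤ : ℕ∞) (iteratedDeriv n h) := by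
  rw [iteratedDeriv_eq_iterate]
  exact hs.iterate_deriv n

lemma ibp_iter (n : ℕ) {lam : ℝ} (hlam : lam ≠ 0) {h : ℝ → ℂ} (hs : ContDiff ℝ (⊤ : ℕ∞) h)
    (hc : HasCompactSupport h) :
    ∫ τ in Ioi (0:ℝ), Complex.exp (Complex.I * lam * τ) * h τ
      = (∑ j ∈ Finset.range n, iteratedDeriv j h 0 / (-(Complex.I * lam)) ^ (j + 1))
        + (∫ τ in Ioi (0:ℝ), Complex.exp (Complex.I * lam * τ) * iteratedDeriv n h τ)
            / (-(Complex.I * lam)) ^ n := by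
  have hne : -(Complex.I * (lam : ℂ)) ≠ 0 := by
    simp [Complex.I_ne_zero, Complex.ofReal_eq_zero, hlam]
  induction n with
  | zero => simp
  | succ n ih =>
    rw [ih, ibp_step hlam (cd_itd hs n) (hcs_itd hc n), Finset.sum_range_succ,
      ← iteratedDeriv_succ, ← add_div, div_div, ← pow_succ', add_div, add_assoc]

/-- Principal-symbol asymptotics of the FIO amplitude: for `ρ` smooth on `ℝ² \ {0}`,
homogeneous of degree `0`, `φ(τ) = ρ(1,τ)` compactly supported with `φ^{(l)}(0) = 0`
for `0 ≤ l ≤ k-1`, and every `δ > 0`, there is `C` such that for all `ξ₁ > 0` and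
`|s| ≥ δ`, `|∫_0^∞ e^{isξ₂} (ξ₁²+ξ₂²)^{m/2} ρ(ξ₁,ξ₂) dξ₂ − φ^{(k)}(0) ξ₁^{m-k}/(-is)^{k+1}|
  ≤ C ξ₁^{m-k-1}`. -/
theorem stmt_11 (m : ℝ) (hm : 0 ≤ m) (k : ℕ) (ρ : ℝ × ℝ → ℂ)
    (hρ : ContDiffOn ℝ (⊤ : ℕ∞) ρ {ξ : ℝ × ℝ | ξ ≠ 0})
    (hhom : ∀ r : ℝ, 0 < r → ∀ ξ : ℝ × ℝ, ξ ≠ 0 → ρ (r • ξ) = ρ ξ)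
    (φ : ℝ → ℂ) (hφ : φ = fun τ => ρ (1, τ))
    (hcs : HasCompactSupport φ)
    (hvan : ∀ l < k, iteratedDeriv l φ 0 = 0) :
    ∀ δ : ℝ, 0 < δ → ∃ C : ℝ, ∀ ξ₁ : ℝ, 0 < ξ₁ → ∀ s : ℝ, δ ≤ |s| →
      ‖(∫ ξ₂ in Set.Ioi (0 : ℝ),
            Complex.exp (Complex.I * s * ξ₂) * ((ξ₁ ^ 2 + ξ₂ ^ 2) ^ (m / 2) : ℝ) * ρ (ξ₁, ξ₂))
          - iteratedDeriv k φ 0 * (ξ₁ ^ (m - k) : ℝ) / (-(Complex.I * s)) ^ (k + 1)‖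
        ≤ C * (ξ₁ ^ (m - k - 1) : ℝ) := by
  intro δ hδ
  have hφs : ContDiff ℝ (⊤ : ℕ∞) φ := by
    rw [hφ, contDiff_iff_contDiffAt]
    intro τ
    have hne : ((1 : ℝ), τ) ≠ (0 : ℝ × ℝ) := by simp [Prod.ext_iff]
    exact (hρ.contDiffAt (IsOpen.mem_nhds isOpen_ne hne)).comp τ
      (contDiffAt_const.prodMk contDiffAt_id)
  set w : ℝ → ℂ := fun τ => (((1 + τ ^ 2) ^ (m / 2) : ℝ) : ℂ) with hw_def
  have hws : ContDiff ℝ (⊤ : ℕ∞) w := by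
    apply Complex.ofRealCLM.contDiff.comp
    exact ContDiff.rpow_const_of_ne (contDiff_const.add (contDiff_id.pow 2))
      (fun x => by positivity)
  set g : ℝ → ℂ := fun τ => w τ * φ τ with hg_def
  have hgs : ContDiff ℝ (⊤ : ℕ∞) g := hws.mul hφs
  have hgc : HasCompactSupport g := hcs.mul_left
  obtain ⟨hgvan, hgk⟩ := leibniz_vanish k φ w hφs hws hvan
  have hw0 : w 0 = 1 := by simp [hw_def]
  rw [hw0, one_mul] at hgk
  set c₁ : ℂ := iteratedDeriv (k + 1) g 0 with hc₁
  set M : ℝ := ∫ τ : ℝ, ‖iteratedDeriv (k + 2) g τ‖ with hM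
  have hMnn : 0 ≤ M := integral_nonneg (fun τ => norm_nonneg _)
  refine ⟨(‖c₁‖ + M) / δ ^ (k + 2), ?_⟩
  intro ξ₁ hξ₁ s hs
  have hsne : s ≠ 0 := fun h => by simp [h] at hs; linarith
  have hlam : s * ξ₁ ≠ 0 := mul_ne_zero hsne hξ₁.ne'
  -- change of variables
  have hcov : (∫ ξ₂ in Ioi (0 : ℝ),
        Complex.exp (Complex.I * s * ξ₂) * ((ξ₁ ^ 2 + ξ₂ ^ 2) ^ (m / 2) : ℝ) * ρ (ξ₁, ξ₂))
      = (ξ₁ : ℂ) * ((ξ₁ ^ m : ℝ) : ℂ) *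
        ∫ τ in Ioi (0 : ℝ), Complex.exp (Complex.I * ((s * ξ₁ : ℝ) : ℂ) * τ) * g τ := by
    set F : ℝ → ℂ := fun ξ₂ =>
      Complex.exp (Complex.I * s * ξ₂) * ((ξ₁ ^ 2 + ξ₂ ^ 2) ^ (m / 2) : ℝ) * ρ (ξ₁, ξ₂) with hF
    have cov := integral_comp_mul_left_Ioi F 0 hξ₁
    rw [mul_zero] at cov
    have hFeq : ∀ τ : ℝ, F (ξ₁ * τ)
        = ((ξ₁ ^ m : ℝ) : ℂ) * (Complex.exp (Complex.I * ((s * ξ₁ : ℝ) : ℂ) * τ) * g τ) := by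
      intro τ
      have hρeq : ρ (ξ₁, ξ₁ * τ) = φ τ := by
        have hne : ((1 : ℝ), τ) ≠ (0 : ℝ × ℝ) := by simp [Prod.ext_iff]
        have := hhom ξ₁ hξ₁ (1, τ) hne
        simp only [Prod.smul_mk, smul_eq_mul, mul_one] at this
        rw [this, hφ]
      have hrpow : (ξ₁ ^ 2 + (ξ₁ * τ) ^ 2) ^ (m / 2) = ξ₁ ^ m * (1 + τ ^ 2) ^ (m / 2) := by
        have h1 : ξ₁ ^ 2 + (ξ₁ * τ) ^ 2 = ξ₁ ^ 2 * (1 + τ ^ 2) := by ring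
        rw [h1, Real.mul_rpow (sq_nonneg _) (by positivity), ← Real.rpow_natCast ξ₁ 2,
          ← Real.rpow_mul hξ₁.le, show ((2:ℕ):ℝ) * (m/2) = m by push_cast; ring]
      have hexp : Complex.exp (Complex.I * s * (ξ₁ * τ : ℝ))
          = Complex.exp (Complex.I * ((s * ξ₁ : ℝ) : ℂ) * τ) := by
        push_cast; ring_nf
      rw [hF]
      simp only
      rw [hρeq, hrpow, hexp, hg_def, hw_def]
      push_cast
      ring
    rw [funext hFeq] at cov
    rw [MeasureTheory.integral_const_mul] at cov
    have : (∫ x in Ioi (0:ℝ), F x) = ξ₁ • ((((ξ₁ ^ m : ℝ)) : ℂ) *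
        ∫ τ in Ioi (0 : ℝ), Complex.exp (Complex.I * ((s * ξ₁ : ℝ) : ℂ) * τ) * g τ) := by
      rw [cov, smul_smul, mul_inv_cancel₀ hξ₁.ne', one_smul]
    rw [hF] at this
    rw [this, Complex.real_smul, mul_assoc]
  -- integration by parts
  set R : ℂ := ∫ τ in Ioi (0:ℝ),
      Complex.exp (Complex.I * ((s * ξ₁ : ℝ) : ℂ) * τ) * iteratedDeriv (k + 2) g τ with hR
  have hibp : (∫ τ in Ioi (0 : ℝ), Complex.exp (Complex.I * ((s * ξ₁ : ℝ) : ℂ) * τ) * g τ)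
      = iteratedDeriv k φ 0 / (-(Complex.I * ((s * ξ₁ : ℝ) : ℂ))) ^ (k + 1)
        + (c₁ + R) / (-(Complex.I * ((s * ξ₁ : ℝ) : ℂ))) ^ (k + 2) := by
    rw [ibp_iter (k + 2) hlam hgs hgc, Finset.sum_range_succ, Finset.sum_range_succ,
      Finset.sum_eq_zero (fun j hj => by rw [hgvan j (Finset.mem_range.mp hj)]; simp), hgk,
      zero_add, add_div, add_assoc, ← hc₁, ← hR]
  -- nonvanishing facts
  have hsC : (-(Complex.I * (s : ℂ))) ≠ 0 := by
    simp [Complex.I_ne_zero, Complex.ofReal_eq_zero, hsne]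
  have hξC : ((ξ₁ : ℝ) : ℂ) ≠ 0 := by
    simp [Complex.ofReal_eq_zero, hξ₁.ne']
  have hxsplit : (-(Complex.I * ((s * ξ₁ : ℝ) : ℂ))) = (-(Complex.I * (s : ℂ))) * ξ₁ := by
    push_cast; ring
  -- main term identity
  have e2 : ξ₁ ^ (m - (k:ℝ)) * ξ₁ ^ (k + 1 : ℕ) = ξ₁ * ξ₁ ^ m := by
    rw [← Real.rpow_natCast ξ₁ (k+1), ← Real.rpow_add hξ₁]
    push_cast
    rw [show m - (k:ℝ) + ((k:ℝ) + 1) = m + 1 by ring, Real.rpow_add hξ₁, Real.rpow_one]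
    ring
  have e2C : ((ξ₁ ^ (m - (k:ℝ)) : ℝ) : ℂ) * ((ξ₁ : ℂ)) ^ (k + 1 : ℕ)
      = (ξ₁ : ℂ) * ((ξ₁ ^ m : ℝ) : ℂ) := by
    exact_mod_cast congrArg (Complex.ofReal) e2
  have main_eq : (ξ₁ : ℂ) * ((ξ₁ ^ m : ℝ) : ℂ) *
        (iteratedDeriv k φ 0 / (-(Complex.I * ((s * ξ₁ : ℝ) : ℂ))) ^ (k + 1))
      = iteratedDeriv k φ 0 * ((ξ₁ ^ (m - (k:ℝ)) : ℝ) : ℂ) / (-(Complex.I * (s : ℂ))) ^ (k + 1) := by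
    rw [hxsplit, mul_pow]
    field_simp
    linear_combination (-(iteratedDeriv k φ 0)) * e2C
  -- the difference
  have hdiff : (∫ ξ₂ in Ioi (0 : ℝ),
        Complex.exp (Complex.I * s * ξ₂) * ((ξ₁ ^ 2 + ξ₂ ^ 2) ^ (m / 2) : ℝ) * ρ (ξ₁, ξ₂))
      - iteratedDeriv k φ 0 * ((ξ₁ ^ (m - (k:ℝ)) : ℝ) : ℂ) / (-(Complex.I * (s : ℂ))) ^ (k + 1)
      = (ξ₁ : ℂ) * ((ξ₁ ^ m : ℝ) : ℂ) *
          ((c₁ + R) / (-(Complex.I * ((s * ξ₁ : ℝ) : ℂ))) ^ (k + 2)) := by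
    rw [hcov, hibp, mul_add, main_eq]
    ring
  rw [hdiff]
  -- norm bound on R
  have hRnorm : ‖R‖ ≤ M := by
    have step1 : ‖R‖ ≤ ∫ τ in Ioi (0:ℝ), ‖Complex.exp (Complex.I * ((s * ξ₁ : ℝ) : ℂ) * τ) *
        iteratedDeriv (k + 2) g τ‖ := norm_integral_le_integral_norm _
    have step2 : (∫ τ in Ioi (0:ℝ), ‖Complex.exp (Complex.I * ((s * ξ₁ : ℝ) : ℂ) * τ) *
        iteratedDeriv (k + 2) g τ‖) = ∫ τ in Ioi (0:ℝ), ‖iteratedDeriv (k + 2) g τ‖ := by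
      congr 1
      funext τ
      rw [norm_mul]
      have : ‖Complex.exp (Complex.I * ((s * ξ₁ : ℝ) : ℂ) * τ)‖ = 1 := by
        rw [Complex.norm_exp]
        simp [Complex.mul_re, Complex.mul_im]
      rw [this, one_mul]
    have step3 : (∫ τ in Ioi (0:ℝ), ‖iteratedDeriv (k + 2) g τ‖) ≤ M := by
      rw [hM]
      apply setIntegral_le_integral
      · exact ((cd_itd hgs (k+2)).continuous.norm).integrable_of_hasCompactSupport
          ((hcs_itd hgc (k+2)).norm)
      · filter_upwards with τ using norm_nonneg _
    linarith [step1, step2 ▸ step1]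
  -- final computation
  have hnormx : ‖(-(Complex.I * ((s * ξ₁ : ℝ) : ℂ)))‖ = |s| * ξ₁ := by
    rw [norm_neg, norm_mul, Complex.norm_I, one_mul, Complex.norm_real, Real.norm_eq_abs,
      abs_mul, abs_of_pos hξ₁]
  rw [norm_mul, norm_mul, norm_div, norm_pow, hnormx]
  rw [Complex.norm_real, Complex.norm_real, Real.norm_eq_abs, Real.norm_eq_abs,
    abs_of_pos hξ₁, abs_of_pos (Real.rpow_pos_of_pos hξ₁ m)]
  have hNle : ‖c₁ + R‖ ≤ ‖c₁‖ + M := (norm_add_le _ _).trans (by linarith)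
  have hδξ : 0 < δ * ξ₁ := mul_pos hδ hξ₁
  have hpowle : (δ * ξ₁) ^ (k + 2) ≤ (|s| * ξ₁) ^ (k + 2) :=
    pow_le_pow_left₀ hδξ.le (mul_le_mul_of_nonneg_right hs hξ₁.le) _
  have e3 : ξ₁ * ξ₁ ^ m = ξ₁ ^ (m - (k:ℝ) - 1) * ξ₁ ^ (k + 2 : ℕ) := by
    rw [← Real.rpow_natCast ξ₁ (k+2), ← Real.rpow_add hξ₁]
    push_cast
    rw [show m - (k:ℝ) - 1 + ((k:ℝ) + 2) = m + 1 by ring, Real.rpow_add hξ₁, Real.rpow_one]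
    ring
  calc ξ₁ * ξ₁ ^ m * (‖c₁ + R‖ / (|s| * ξ₁) ^ (k + 2))
      ≤ ξ₁ * ξ₁ ^ m * ((‖c₁‖ + M) / (δ * ξ₁) ^ (k + 2)) := by
        have h1 : 0 ≤ ξ₁ * ξ₁ ^ m := mul_nonneg hξ₁.le (Real.rpow_nonneg hξ₁.le m)
        apply mul_le_mul_of_nonneg_left _ h1
        exact div_le_div₀ (add_nonneg (norm_nonneg _) hMnn) hNle (pow_pos hδξ _) hpowle
    _ = (‖c₁‖ + M) / δ ^ (k + 2) * ξ₁ ^ (m - (k:ℝ) - 1) := by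
        rw [e3, mul_pow]
        field_simp
end

section
/- (The amplitude a(x,y,ξ₁) belongs to the symbol class S^{m-k} for large |ξ₁|, as claimed in the proof of Proposition 4.1 b).) Let m ≥ 0 be a real number, k a natural number, and ρ : ℝ² \ {0} → ℂ smooth and homogeneous of degree 0 such that φ(τ) := ρ(1,τ) is compactly supported and φ^{(l)}(0) = 0 for all 0 ≤ l ≤ k-1. Define a(s, ξ₁) = ∫_0^∞ e^{isξ₂} (ξ₁² + ξ₂²)^{m/2} ρ(ξ₁, ξ₂) dξ₂ for s ∈ ℝ and ξ₁ > 0. Then a is smooth on ℝ × (0,∞), and for all natural numbers j, n and every δ > 0 there exists a constant C such that | ∂_s^j ∂_{ξ₁}^n a(s, ξ₁) | ≤ C ξ₁^{m-k-n} for all ξ₁ ≥ 1 and all s with |s| ≥ δ. -/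
open MeasureTheory Real Complex Set Filter Topology

namespace Stmt12Aux

noncomputable def Fint (g : ℝ → ℂ) (t : ℝ) : ℂ :=
  ∫ x in Ioi (0:ℝ), Complex.exp (Complex.I * t * x) * g x

lemma norm_exp_I_mul (t x : ℝ) : ‖Complex.exp (Complex.I * t * x)‖ = 1 := by
  rw [Complex.norm_exp]
  simp [Complex.mul_re]

lemma integrable_exp_mul {g : ℝ → ℂ} (hg : Continuous g) (hcs : HasCompactSupport g) (t : ℝ) :
    Integrable (fun x : ℝ => Complex.exp (Complex.I * t * x) * g x)
      (volume.restrict (Ioi (0:ℝ))) := by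
  apply Integrable.restrict
  apply Continuous.integrable_of_hasCompactSupport
  · exact (Continuous.cexp (by continuity)).mul hg
  · exact hcs.mul_left

lemma cont_mul_I {g : ℝ → ℂ} (hg : Continuous g) :
    Continuous (fun x : ℝ => Complex.I * x * g x) :=
  (continuous_const.mul Complex.continuous_ofReal).mul hg

lemma cs_mul_I {g : ℝ → ℂ} (hcs : HasCompactSupport g) :
    HasCompactSupport (fun x : ℝ => Complex.I * x * g x) := hcs.mul_left

lemma hasDerivAt_Fint {g : ℝ → ℂ} (hg : Continuous g) (hcs : HasCompactSupport g) (t : ℝ) :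
    HasDerivAt (Fint g) (Fint (fun x => Complex.I * x * g x) t) t := by
  have key := hasDerivAt_integral_of_dominated_loc_of_deriv_le
    (F := fun (t : ℝ) (x : ℝ) => Complex.exp (Complex.I * t * x) * g x)
    (F' := fun (t : ℝ) (x : ℝ) => Complex.exp (Complex.I * t * x) * (Complex.I * x * g x))
    (x₀ := t) (bound := fun x => ‖Complex.I * (x:ℂ) * g x‖)
    (μ := volume.restrict (Ioi (0:ℝ))) (s := Metric.ball t 1) (Metric.ball_mem_nhds t one_pos)
    ?_ (integrable_exp_mul hg hcs t) ?_ ?_ ?_ ?_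
  · exact key.2
  · filter_upwards with u
    exact ((Continuous.cexp (by continuity)).mul hg).aestronglyMeasurable.restrict
  · exact ((Continuous.cexp (by continuity)).mul (cont_mul_I hg)).aestronglyMeasurable.restrict
  · filter_upwards with x u _hu
    rw [norm_mul, norm_exp_I_mul, one_mul]
  · apply Integrable.restrict
    exact ((cont_mul_I hg).norm).integrable_of_hasCompactSupport (cs_mul_I hcs).norm
  · filter_upwards with x u _hu
    have h1 : HasDerivAt (fun u : ℝ => Complex.I * u * x) (Complex.I * x) u := by
      simpa using ((Complex.ofRealCLM.hasDerivAt (x := u)).const_mul Complex.I).mul_const (x:ℂ)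
    have h2 := (h1.cexp).mul_const (g x)
    exact h2.congr_deriv (by ring)

lemma deriv_Fint {g : ℝ → ℂ} (hg : Continuous g) (hcs : HasCompactSupport g) :
    deriv (Fint g) = Fint (fun x => Complex.I * x * g x) :=
  funext fun t => (hasDerivAt_Fint hg hcs t).deriv

lemma contDiff_Fint {g : ℝ → ℂ} (hg : Continuous g) (hcs : HasCompactSupport g) :
    ContDiff ℝ (⊤:ℕ∞) (Fint g) := by
  rw [contDiff_infty]
  intro n
  induction n generalizing g with
  | zero =>
    rw [CharP.cast_eq_zero, contDiff_zero]
    have : Differentiable ℝ (Fint g) := fun t => (hasDerivAt_Fint hg hcs t).differentiableAt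
    exact this.continuous
  | succ n ih =>
    have hcast : ((n+1 : ℕ) : WithTop ℕ∞) = (n : WithTop ℕ∞) + 1 := by push_cast; rfl
    rw [hcast, contDiff_succ_iff_deriv]
    refine ⟨fun t => (hasDerivAt_Fint hg hcs t).differentiableAt, ?_, ?_⟩
    · intro h; exact absurd h (WithTop.natCast_ne_top n)
    · rw [deriv_Fint hg hcs]
      exact ih (cont_mul_I hg) (cs_mul_I hcs)


lemma iteratedDeriv_Fint (p : ℕ) :
    ∀ (g : ℝ → ℂ), Continuous g → HasCompactSupport g →
      iteratedDeriv p (Fint g) = Fint (fun x => (Complex.I * x)^p * g x) := by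
  induction p with
  | zero =>
    intro g hg hcs
    funext t
    simp [Fint]
  | succ p ih =>
    intro g hg hcs
    rw [iteratedDeriv_succ', deriv_Fint hg hcs, ih _ (cont_mul_I hg) (cs_mul_I hcs)]
    funext t
    unfold Fint
    congr 1
    funext x
    ring

lemma hcs_iteratedDeriv {g : ℝ → ℂ} (hcs : HasCompactSupport g) (N : ℕ) :
    HasCompactSupport (iteratedDeriv N g) := by
  induction N with
  | zero => simpa using hcs
  | succ N ih => rw [iteratedDeriv_succ]; exact ih.deriv

lemma contDiff_iteratedDeriv {g : ℝ → ℂ} (hg : ContDiff ℝ (⊤:ℕ∞) g) (N : ℕ) :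
    ContDiff ℝ (⊤:ℕ∞) (iteratedDeriv N g) := by
  induction N with
  | zero => simpa using hg
  | succ N ih => rw [iteratedDeriv_succ]; exact (contDiff_infty_iff_deriv.mp ih).2

lemma eventually_zero_atTop {g : ℝ → ℂ} (hcs : HasCompactSupport g) :
    ∀ᶠ x in Filter.atTop, g x = 0 := by
  obtain ⟨R, hR⟩ := (hcs.isCompact.isBounded).subset_closedBall 0
  filter_upwards [Filter.eventually_gt_atTop R] with x hx
  apply image_eq_zero_of_notMem_tsupport
  intro hmem
  have := hR hmem
  simp only [Metric.mem_closedBall, Real.dist_eq, sub_zero] at this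
  have : x ≤ R := le_trans (le_abs_self x) this
  linarith

lemma ibp_step {g : ℝ → ℂ} (hg : ContDiff ℝ (⊤:ℕ∞) g) (hcs : HasCompactSupport g)
    {t : ℝ} (ht : t ≠ 0) :
    Fint g t = -(Complex.I * t)⁻¹ * g 0 - (Complex.I * t)⁻¹ * Fint (deriv g) t := by
  have hIt : (Complex.I * t) ≠ 0 := by
    simp [Complex.ext_iff, ht]
  set K : ℂ := (Complex.I * t)⁻¹ with hK
  have hgc : Continuous g := hg.continuous
  have hgd : Differentiable ℝ g := hg.differentiable (by simp)
  have hg'c : Continuous (deriv g) := (contDiff_infty_iff_deriv.mp hg).2.continuous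
  -- H x := K * (exp (I t x) * g x)
  have hderiv : ∀ x : ℝ, HasDerivAt (fun x : ℝ => K * (Complex.exp (Complex.I * t * x) * g x))
      (Complex.exp (Complex.I * t * x) * g x + K * (Complex.exp (Complex.I * t * x) * deriv g x)) x := by
    intro x
    have h1 : HasDerivAt (fun x : ℝ => Complex.I * t * x) (Complex.I * t) x := by
      simpa using ((Complex.ofRealCLM.hasDerivAt (x := x)).const_mul (Complex.I * t))
    have h2 := (h1.cexp).mul ((hgd x).hasDerivAt)
    have h3 := h2.const_mul K
    have hKI : K * (Complex.I * t) = 1 := by rw [hK]; exact inv_mul_cancel₀ hIt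
    exact h3.congr_deriv (by linear_combination (Complex.exp (Complex.I * t * x) * g x) * hKI)
  have hint1 : Integrable (fun x : ℝ => Complex.exp (Complex.I * t * x) * g x)
      (volume.restrict (Ioi (0:ℝ))) := integrable_exp_mul hgc hcs t
  have hint2 : Integrable (fun x : ℝ => Complex.exp (Complex.I * t * x) * deriv g x)
      (volume.restrict (Ioi (0:ℝ))) := integrable_exp_mul hg'c hcs.deriv t
  have key := integral_Ioi_of_hasDerivAt_of_tendsto (a := (0:ℝ)) (m := 0)
    (f := fun x : ℝ => K * (Complex.exp (Complex.I * t * x) * g x))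
    (f' := fun x : ℝ => Complex.exp (Complex.I * t * x) * g x
        + K * (Complex.exp (Complex.I * t * x) * deriv g x))
    ?_ (fun x _ => hderiv x) ?_ ?_
  · have hsplit : (∫ x in Ioi (0:ℝ), (Complex.exp (Complex.I * t * x) * g x
        + K * (Complex.exp (Complex.I * t * x) * deriv g x)))
        = Fint g t + K * Fint (deriv g) t := by
      rw [integral_add hint1 (hint2.const_mul K), integral_const_mul]
      rfl
    rw [hsplit] at key
    have : Fint g t + K * Fint (deriv g) t = -(K * (Complex.exp 0 * g 0)) := by
      simpa using key
    rw [Complex.exp_zero, one_mul] at this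
    have := this
    linear_combination this
  · exact (continuous_const.mul ((Continuous.cexp (by continuity)).mul hgc)).continuousWithinAt
  · exact hint1.add (hint2.const_mul K)
  · apply Filter.Tendsto.congr' (f₁ := fun _ : ℝ => (0:ℂ))
    · filter_upwards [eventually_zero_atTop hcs] with x hx
      simp [hx]
    · exact tendsto_const_nhds


lemma ibp_iter {g : ℝ → ℂ} (hg : ContDiff ℝ (⊤:ℕ∞) g) (hcs : HasCompactSupport g)
    (N : ℕ) (hvan : ∀ l < N, iteratedDeriv l g 0 = 0) {t : ℝ} (ht : t ≠ 0) :
    Fint g t = (-(Complex.I * t)⁻¹)^N * Fint (iteratedDeriv N g) t := by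
  induction N with
  | zero => simp
  | succ N ih =>
    rw [ih (fun l hl => hvan l (hl.trans (Nat.lt_succ_self N)))]
    rw [ibp_step (contDiff_iteratedDeriv hg N) (hcs_iteratedDeriv hcs N) ht,
      hvan N (Nat.lt_succ_self N), ← iteratedDeriv_succ]
    ring

lemma decay {g : ℝ → ℂ} (hg : ContDiff ℝ (⊤:ℕ∞) g) (hcs : HasCompactSupport g)
    (N : ℕ) (hvan : ∀ l < N, iteratedDeriv l g 0 = 0) {t : ℝ} (ht : t ≠ 0) :
    ‖Fint g t‖ ≤ (‖iteratedDeriv N g 0‖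
      + ∫ x in Ioi (0:ℝ), ‖iteratedDeriv (N+1) g x‖) * (|t|⁻¹)^(N+1) := by
  have hIt : ‖(Complex.I * t)⁻¹‖ = |t|⁻¹ := by
    rw [norm_inv, norm_mul, Complex.norm_I, one_mul, Complex.norm_real, Real.norm_eq_abs]
  rw [ibp_iter hg hcs N hvan ht,
      ibp_step (contDiff_iteratedDeriv hg N) (hcs_iteratedDeriv hcs N) ht]
  rw [norm_mul, norm_pow, norm_neg, hIt]
  have h2 : ‖Fint (deriv (iteratedDeriv N g)) t‖
      ≤ ∫ x in Ioi (0:ℝ), ‖iteratedDeriv (N+1) g x‖ := by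
    rw [← iteratedDeriv_succ]
    unfold Fint
    refine le_trans (norm_integral_le_integral_norm _) (le_of_eq ?_)
    congr 1
    funext x
    rw [norm_mul, norm_exp_I_mul, one_mul]
  have h3 : ‖-(Complex.I * t)⁻¹ * iteratedDeriv N g 0
      - (Complex.I * t)⁻¹ * Fint (deriv (iteratedDeriv N g)) t‖
      ≤ |t|⁻¹ * (‖iteratedDeriv N g 0‖ + ∫ x in Ioi (0:ℝ), ‖iteratedDeriv (N+1) g x‖) := by
    refine le_trans (norm_sub_le _ _) ?_
    rw [norm_mul, norm_mul, norm_neg, hIt, mul_add]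
    gcongr
  calc (|t|⁻¹)^N * ‖_ - _‖ ≤ (|t|⁻¹)^N * (|t|⁻¹ * (‖iteratedDeriv N g 0‖ + ∫ x in Ioi (0:ℝ), ‖iteratedDeriv (N+1) g x‖)) := by
        gcongr
    _ = _ := by ring


lemma smooth_nat {g : ℝ → ℂ} (hg : ContDiff ℝ (⊤:ℕ∞) g) (n : ℕ) : ContDiff ℝ (n : ℕ) g :=
  hg.of_le (by exact_mod_cast le_top)

lemma iteratedDeriv_add' {f g : ℝ → ℂ} (n : ℕ) (x : ℝ)
    (hf : ContDiff ℝ (⊤:ℕ∞) f) (hg : ContDiff ℝ (⊤:ℕ∞) g) :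
    iteratedDeriv n (fun y => f y + g y) x = iteratedDeriv n f x + iteratedDeriv n g x := by
  have := iteratedDerivWithin_add (Set.mem_univ x) uniqueDiffOn_univ
    (f := f) (g := g) ((smooth_nat hf n).contDiffAt.contDiffWithinAt) ((smooth_nat hg n).contDiffAt.contDiffWithinAt)
  simpa [iteratedDerivWithin_univ, Pi.add_def] using this

lemma deriv_smooth {g : ℝ → ℂ} (hg : ContDiff ℝ (⊤:ℕ∞) g) : ContDiff ℝ (⊤:ℕ∞) (deriv g) :=
  (contDiff_infty_iff_deriv.mp hg).2

lemma vanish_mul (N : ℕ) :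
    ∀ (f g : ℝ → ℂ), ContDiff ℝ (⊤:ℕ∞) f → ContDiff ℝ (⊤:ℕ∞) g →
    (∀ l < N, iteratedDeriv l g 0 = 0) →
    ∀ l < N, iteratedDeriv l (fun x => f x * g x) 0 = 0 := by
  induction N with
  | zero => intro f g _ _ _ l hl; omega
  | succ N ih =>
    intro f g hf hg hvan l hl
    match l with
    | 0 =>
      simpa [iteratedDeriv_zero] using mul_eq_zero_of_right (f 0) (hvan 0 (Nat.succ_pos N))
    | Nat.succ l' =>
      have hl' : l' < N := by omega
      rw [iteratedDeriv_succ']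
      have hfd : Differentiable ℝ f := hf.differentiable (by simp)
      have hgd : Differentiable ℝ g := hg.differentiable (by simp)
      have hd : deriv (fun x => f x * g x) = fun x => deriv f x * g x + f x * deriv g x :=
        funext fun x => deriv_mul (hfd x) (hgd x)
      rw [hd, iteratedDeriv_add' l' 0 ((deriv_smooth hf).mul hg) (hf.mul (deriv_smooth hg))]
      rw [ih (deriv f) g (deriv_smooth hf) hg (fun l hlN => hvan l (hlN.trans (Nat.lt_succ_self N))) l' hl',
          ih f (deriv g) hf (deriv_smooth hg)
          (fun l hlN => by rw [← iteratedDeriv_succ']; exact hvan (l+1) (by omega)) l' hl']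
      simp

lemma vanish_mul_vanishing (N : ℕ) :
    ∀ (h g : ℝ → ℂ), ContDiff ℝ (⊤:ℕ∞) h → h 0 = 0 → ContDiff ℝ (⊤:ℕ∞) g →
    (∀ l < N, iteratedDeriv l g 0 = 0) →
    ∀ l < N + 1, iteratedDeriv l (fun x => h x * g x) 0 = 0 := by
  induction N with
  | zero =>
    intro h g hh hh0 hg _ l hl
    interval_cases l
    simpa [iteratedDeriv_zero] using mul_eq_zero_of_left hh0 (g 0)
  | succ N ih =>
    intro h g hh hh0 hg hvan l hl
    match l with
    | 0 => simpa [iteratedDeriv_zero] using mul_eq_zero_of_left hh0 (g 0)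
    | Nat.succ l' =>
      have hl' : l' < N + 1 := by omega
      rw [iteratedDeriv_succ']
      have hhd : Differentiable ℝ h := hh.differentiable (by simp)
      have hgd : Differentiable ℝ g := hg.differentiable (by simp)
      have hd : deriv (fun x => h x * g x) = fun x => deriv h x * g x + h x * deriv g x :=
        funext fun x => deriv_mul (hhd x) (hgd x)
      rw [hd, iteratedDeriv_add' l' 0 ((deriv_smooth hh).mul hg) (hh.mul (deriv_smooth hg))]
      rw [vanish_mul (N+1) (deriv h) g (deriv_smooth hh) hg hvan l' hl',
          ih h (deriv g) hh hh0 (deriv_smooth hg)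
          (fun l hlN => by rw [← iteratedDeriv_succ']; exact hvan (l+1) (by omega)) l' hl']
      simp

lemma smooth_I_mul : ContDiff ℝ (⊤:ℕ∞) (fun x : ℝ => Complex.I * x) :=
  contDiff_const.mul Complex.ofRealCLM.contDiff

lemma vanish_pow_mul {g : ℝ → ℂ} (hg : ContDiff ℝ (⊤:ℕ∞) g) (k : ℕ)
    (hvan : ∀ l < k, iteratedDeriv l g 0 = 0) (p : ℕ) :
    ∀ l < k + p, iteratedDeriv l (fun x => (Complex.I * x)^p * g x) 0 = 0 := by
  induction p with
  | zero => intro l hl; simpa using hvan l (by omega)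
  | succ p ih =>
    intro l hl
    have heq : (fun x : ℝ => (Complex.I * x)^(p+1) * g x)
        = fun x : ℝ => (Complex.I * x) * ((Complex.I * x)^p * g x) := by
      funext x; ring
    rw [heq]
    exact vanish_mul_vanishing (k+p) _ _ smooth_I_mul (by simp)
      ((smooth_I_mul.pow p).mul hg) ih l (by omega)

lemma smooth_pow_mul {g : ℝ → ℂ} (hg : ContDiff ℝ (⊤:ℕ∞) g) (p : ℕ) :
    ContDiff ℝ (⊤:ℕ∞) (fun x : ℝ => (Complex.I * x)^p * g x) :=
  (smooth_I_mul.pow p).mul hg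

lemma hcs_pow_mul {g : ℝ → ℂ} (hcs : HasCompactSupport g) (p : ℕ) :
    HasCompactSupport (fun x : ℝ => (Complex.I * x)^p * g x) := hcs.mul_left


lemma decay_Fp {ψ : ℝ → ℂ} (hψ : ContDiff ℝ (⊤:ℕ∞) ψ) (hcs : HasCompactSupport ψ)
    (k : ℕ) (hvan : ∀ l < k, iteratedDeriv l ψ 0 = 0) (p : ℕ) :
    ∃ C : ℝ, 0 ≤ C ∧ ∀ t : ℝ, t ≠ 0 →
      ‖iteratedDeriv p (Fint ψ) t‖ ≤ C * (|t|⁻¹)^(k+p+1) := by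
  set g : ℝ → ℂ := fun x => (Complex.I * x)^p * ψ x with hgdef
  refine ⟨‖iteratedDeriv (k+p) g 0‖ + ∫ x in Ioi (0:ℝ), ‖iteratedDeriv (k+p+1) g x‖,
    ?_, fun t ht => ?_⟩
  · have : (0:ℝ) ≤ ∫ x in Ioi (0:ℝ), ‖iteratedDeriv (k+p+1) g x‖ :=
      integral_nonneg fun x => norm_nonneg _
    positivity
  · rw [iteratedDeriv_Fint p ψ hψ.continuous hcs]
    exact decay (smooth_pow_mul hψ p) (hcs_pow_mul hcs p) (k+p)
      (vanish_pow_mul hψ k hvan p) ht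

lemma iteratedDeriv_iteratedDeriv (j : ℕ) (F : ℝ → ℂ) :
    ∀ (i : ℕ), iteratedDeriv i (iteratedDeriv j F) = iteratedDeriv (j + i) F := by
  intro i
  induction i with
  | zero => rfl
  | succ i ih => rw [iteratedDeriv_succ, ih, ← iteratedDeriv_succ]; rfl

lemma iteratedDeriv_const_mul' (c : ℂ) {f : ℝ → ℂ} (hf : ContDiff ℝ (⊤:ℕ∞) f)
    (n : ℕ) (x : ℝ) : iteratedDeriv n (fun y => c * f y) x = c * iteratedDeriv n f x := by
  have := iteratedDerivWithin_const_smul (Set.mem_univ x) uniqueDiffOn_univ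
    (f := f) (c := c) (smooth_nat hf n).contDiffAt.contDiffWithinAt
  simpa [iteratedDerivWithin_univ, smul_eq_mul] using this

lemma iteratedDeriv_ofReal_rpow (α : ℝ) (i : ℕ) :
    ∀ u : ℝ, 0 < u → iteratedDeriv i (fun w : ℝ => ((w ^ α : ℝ) : ℂ)) u
      = ((∏ l ∈ Finset.range i, (α - l) : ℝ) : ℂ) * ((u ^ (α - i) : ℝ) : ℂ) := by
  induction i with
  | zero => intro u hu; simp
  | succ i ih =>
    intro u hu
    rw [iteratedDeriv_succ]
    have hev : iteratedDeriv i (fun w : ℝ => ((w ^ α : ℝ) : ℂ))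
        =ᶠ[nhds u] fun w => ((∏ l ∈ Finset.range i, (α - l) : ℝ) : ℂ) * ((w ^ (α - i) : ℝ) : ℂ) := by
      filter_upwards [IsOpen.mem_nhds isOpen_Ioi hu] with w hw
      exact ih w hw
    rw [hev.deriv_eq]
    have hd : HasDerivAt (fun w : ℝ => ((∏ l ∈ Finset.range i, (α - l) : ℝ) : ℂ) * ((w ^ (α - i) : ℝ) : ℂ))
        (((∏ l ∈ Finset.range i, (α - l) : ℝ) : ℂ) * (((α - i) * u ^ (α - i - 1) : ℝ) : ℂ)) u := by
      exact ((Real.hasDerivAt_rpow_const (Or.inl hu.ne')).ofReal_comp).const_mul _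
    rw [hd.deriv]
    rw [Finset.prod_range_succ,
      show α - (i:ℝ) - 1 = α - ((i+1 : ℕ) : ℝ) by push_cast; ring]
    push_cast
    ring

end Stmt12Aux

open Stmt12Aux


/-- The amplitude `a(s,ξ₁) = ∫_0^∞ e^{isξ₂} (ξ₁²+ξ₂²)^{m/2} ρ(ξ₁,ξ₂) dξ₂` is smooth on
`ℝ × (0,∞)` and belongs to the symbol class `S^{m-k}` for large `ξ₁`: for all `j, n` and
all `δ > 0` there is `C` with `|∂_s^j ∂_{ξ₁}^n a(s,ξ₁)| ≤ C ξ₁^{m-k-n}` for `ξ₁ ≥ 1`,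
`|s| ≥ δ`. -/
theorem stmt_12 (m : ℝ) (hm : 0 ≤ m) (k : ℕ) (ρ : ℝ × ℝ → ℂ)
    (hρ : ContDiffOn ℝ (⊤ : ℕ∞) ρ {ξ : ℝ × ℝ | ξ ≠ 0})
    (hhom : ∀ r : ℝ, 0 < r → ∀ ξ : ℝ × ℝ, ξ ≠ 0 → ρ (r • ξ) = ρ ξ)
    (φ : ℝ → ℂ) (hφ : φ = fun τ => ρ (1, τ))
    (hcs : HasCompactSupport φ)
    (hvan : ∀ l < k, iteratedDeriv l φ 0 = 0)
    (a : ℝ → ℝ → ℂ)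
    (ha : a = fun (s : ℝ) (ξ₁ : ℝ) => ∫ ξ₂ in Set.Ioi (0 : ℝ),
        Complex.exp (Complex.I * s * ξ₂) * ((ξ₁ ^ 2 + ξ₂ ^ 2) ^ (m / 2) : ℝ) * ρ (ξ₁, ξ₂)) :
    ContDiffOn ℝ (⊤ : ℕ∞) (fun p : ℝ × ℝ => a p.1 p.2) {p : ℝ × ℝ | 0 < p.2} ∧
    ∀ (j n : ℕ), ∀ δ : ℝ, 0 < δ → ∃ C : ℝ, ∀ ξ₁ : ℝ, 1 ≤ ξ₁ → ∀ s : ℝ, δ ≤ |s| →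
      ‖iteratedDeriv n (fun u : ℝ => iteratedDeriv j (fun v : ℝ => a v u) s) ξ₁‖
        ≤ C * (ξ₁ ^ (m - k - n) : ℝ) := by
  -- the rescaled profile
  set ψ : ℝ → ℂ := fun τ => (((1+τ^2) ^ (m/2) : ℝ) : ℂ) * φ τ with hψdef
  -- smoothness of φ
  have hφsm : ContDiff ℝ (⊤:ℕ∞) φ := by
    rw [contDiff_iff_contDiffAt]
    intro τ
    rw [hφ]
    have h1 : ContDiffAt ℝ (⊤:ℕ∞) ρ (1, τ) := by
      apply hρ.contDiffAt
      apply IsOpen.mem_nhds isOpen_ne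
      simp [Prod.ext_iff]
    exact h1.comp τ (contDiffAt_const.prodMk contDiffAt_id)
  have hβsm : ContDiff ℝ (⊤:ℕ∞) (fun τ : ℝ => (((1+τ^2) ^ (m/2) : ℝ) : ℂ)) := by
    rw [contDiff_iff_contDiffAt]
    intro τ
    refine (Complex.ofRealCLM.contDiff.contDiffAt).comp τ ?_
    refine ContDiffAt.comp τ (Real.contDiffAt_rpow_const_of_ne ?_) ?_
    · positivity
    · exact (contDiffAt_const.add (contDiffAt_id.pow 2))
  have hψsm : ContDiff ℝ (⊤:ℕ∞) ψ := hβsm.mul hφsm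
  have hψcs : HasCompactSupport ψ := hcs.mul_left
  have hψvan : ∀ l < k, iteratedDeriv l ψ 0 = 0 :=
    vanish_mul k _ φ hβsm hφsm hvan
  set F : ℝ → ℂ := Fint ψ with hFdef
  have hFsm : ContDiff ℝ (⊤:ℕ∞) F := contDiff_Fint hψsm.continuous hψcs
  -- homogeneity
  have hρφ : ∀ u : ℝ, 0 < u → ∀ y : ℝ, ρ (u, y) = φ (y / u) := by
    intro u hu y
    have h1 : ((1:ℝ), y/u) ≠ (0 : ℝ × ℝ) := by
      simp [Prod.ext_iff]
    have h2 := hhom u hu ((1:ℝ), y/u) h1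
    have h3 : u • ((1:ℝ), y/u) = (u, y) := by
      simp [Prod.smul_mk, smul_eq_mul, mul_div_cancel₀ _ hu.ne']
    rw [h3] at h2
    rw [h2, hφ]
  -- key scaling identity
  have key : ∀ s u : ℝ, 0 < u → a s u = ((u ^ (m+1) : ℝ) : ℂ) * F (s * u) := by
    intro s u hu
    rw [ha]
    simp only
    have hrw : ∀ y : ℝ, Complex.exp (Complex.I * s * y) * ((u ^ 2 + y ^ 2) ^ (m / 2) : ℝ) * ρ (u, y)
        = Complex.exp (Complex.I * s * y) * ((u ^ 2 + y ^ 2) ^ (m / 2) : ℝ) * φ (y / u) := by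
      intro y; rw [hρφ u hu y]
    rw [MeasureTheory.setIntegral_congr_fun measurableSet_Ioi (fun y _ => hrw y)]
    have hsub := integral_comp_mul_left_Ioi
      (fun y : ℝ => Complex.exp (Complex.I * s * y) * ((u ^ 2 + y ^ 2) ^ (m / 2) : ℝ) * φ (y / u))
      0 hu
    rw [mul_zero] at hsub
    have hsub' : (∫ x in Ioi (0:ℝ), Complex.exp (Complex.I * s * x) * ((u ^ 2 + x ^ 2) ^ (m / 2) : ℝ) * φ (x / u))
        = u • ∫ x in Ioi (0:ℝ), Complex.exp (Complex.I * s * ((u*x : ℝ) : ℂ)) * ((u ^ 2 + (u*x) ^ 2) ^ (m / 2) : ℝ) * φ ((u*x) / u) := by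
      rw [hsub, smul_smul, mul_inv_cancel₀ hu.ne', one_smul]
    rw [hsub']
    have hGx : ∀ x : ℝ, Complex.exp (Complex.I * s * ((u*x : ℝ) : ℂ)) * ((u ^ 2 + (u*x) ^ 2) ^ (m / 2) : ℝ) * φ ((u*x) / u)
        = ((u ^ (m:ℝ) : ℝ) : ℂ) * (Complex.exp (Complex.I * (s*u) * x) * ψ x) := by
      intro x
      have e1 : ((u:ℝ) ^ 2 + (u*x) ^ 2) ^ (m / 2) = u ^ (m:ℝ) * (1 + x^2) ^ (m/2) := by
        have : (u:ℝ) ^ 2 + (u*x) ^ 2 = u^2 * (1 + x^2) := by ring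
        rw [this, Real.mul_rpow (sq_nonneg u) (by positivity)]
        congr 1
        rw [← Real.rpow_natCast u 2, ← Real.rpow_mul hu.le]
        congr 1
        ring
      have e2 : (u*x) / u = x := by field_simp
      have e3 : Complex.I * s * (u*x : ℝ) = Complex.I * ((s*u : ℝ) : ℂ) * (x:ℝ) := by
        push_cast; ring
      rw [e1, e2, e3, hψdef]
      push_cast
      ring
    rw [MeasureTheory.setIntegral_congr_fun measurableSet_Ioi (fun x _ => hGx x)]
    rw [MeasureTheory.integral_const_mul]
    have hF' : F (s*u) = ∫ (x : ℝ) in Ioi 0, Complex.exp (Complex.I * ((s:ℂ) * (u:ℂ)) * (x:ℂ)) * ψ x := by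
      rw [hFdef]; unfold Fint; norm_cast
    rw [hF', Complex.real_smul, ← mul_assoc, ← Complex.ofReal_mul]
    congr 2
    rw [Real.rpow_add_one hu.ne']
    ring
  constructor
  · -- smoothness
    have hmodel : ContDiffOn ℝ (⊤:ℕ∞)
        (fun p : ℝ × ℝ => ((p.2 ^ (m+1) : ℝ) : ℂ) * F (p.1 * p.2)) {p : ℝ × ℝ | 0 < p.2} := by
      apply ContDiffOn.mul
      · intro p hp
        apply ContDiffAt.contDiffWithinAt
        refine (Complex.ofRealCLM.contDiff.contDiffAt).comp p ?_
        exact (Real.contDiffAt_rpow_const_of_ne (ne_of_gt hp)).comp p contDiffAt_snd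
      · exact (hFsm.comp (contDiff_fst.mul contDiff_snd)).contDiffOn
    apply hmodel.congr
    intro p hp
    exact key p.1 p.2 hp
  · intro j n δ hδ
    have hdec := decay_Fp hψsm hψcs k hψvan
    choose Cp hCp0 hCp using hdec
    set α : ℝ := m + 1 + j with hα
    set K : ℕ → ℝ := fun i => |∏ l ∈ Finset.range i, (α - l)| with hKdef
    refine ⟨∑ i ∈ Finset.range (n+1),
      (n.choose i : ℝ) * K i * (Cp (j + (n - i)) * (δ⁻¹)^(k+j+1)), ?_⟩
    intro ξ₁ hξ₁ s hs
    have hξpos : (0:ℝ) < ξ₁ := lt_of_lt_of_le one_pos hξ₁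
    have hspos : (0:ℝ) < |s| := lt_of_lt_of_le hδ hs
    have hs0 : s ≠ 0 := abs_pos.mp hspos
    set A : ℝ → ℂ := fun u => ((u ^ α : ℝ) : ℂ) with hAdef
    set B : ℝ → ℂ := fun u => iteratedDeriv j F (u * s) with hBdef
    have hmem : ξ₁ ∈ Ioi (0:ℝ) := hξpos
    -- outer function agrees with A * B near ξ₁
    have houter : (fun u : ℝ => iteratedDeriv j (fun v : ℝ => a v u) s)
        =ᶠ[nhds ξ₁] fun u => A u * B u := by
      filter_upwards [IsOpen.mem_nhds isOpen_Ioi hmem] with u hu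
      have hu' : (0:ℝ) < u := hu
      have h1 : (fun v : ℝ => a v u) = fun v : ℝ => ((u ^ (m+1) : ℝ) : ℂ) * F (u * v) := by
        funext v
        rw [key v u hu', mul_comm v u]
      have hcomp : ContDiff ℝ (⊤:ℕ∞) (fun v : ℝ => F (u * v)) :=
        hFsm.comp ((contDiff_const.mul contDiff_id) : ContDiff ℝ (⊤:ℕ∞) fun v : ℝ => u * v)
      rw [h1, iteratedDeriv_const_mul' ((u ^ (m+1) : ℝ) : ℂ) (f := fun v : ℝ => F (u * v)) hcomp j s]
      simp only [iteratedDeriv_comp_const_smul (smooth_nat hFsm j) u]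
      show _ = ((u ^ α : ℝ) : ℂ) * iteratedDeriv j F (u * s)
      rw [Complex.real_smul, ← mul_assoc, ← Complex.ofReal_mul]
      congr 2
      rw [← Real.rpow_natCast u j, ← Real.rpow_add hu', hα]
    rw [houter.iteratedDeriv_eq n]
    -- smoothness of A and B on Ioi 0
    have hAcd : ContDiffOn ℝ (⊤:ℕ∞) A (Ioi (0:ℝ)) := by
      intro u hu
      apply ContDiffAt.contDiffWithinAt
      refine (Complex.ofRealCLM.contDiff.contDiffAt).comp u ?_
      exact Real.contDiffAt_rpow_const_of_ne (ne_of_gt hu)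
    have hBcd : ContDiffOn ℝ (⊤:ℕ∞) B (Ioi (0:ℝ)) :=
      ((contDiff_iteratedDeriv hFsm j).comp (contDiff_id.mul contDiff_const)).contDiffOn
    -- A factor computation
    have hAfact : ∀ i : ℕ, ‖iteratedFDerivWithin ℝ i A (Ioi (0:ℝ)) ξ₁‖ = K i * ξ₁ ^ (α - i) := by
      intro i
      rw [iteratedFDerivWithin_of_isOpen i isOpen_Ioi hmem,
        norm_iteratedFDeriv_eq_norm_iteratedDeriv]
      have : iteratedDeriv i A ξ₁
          = ((∏ l ∈ Finset.range i, (α - l) : ℝ) : ℂ) * ((ξ₁ ^ (α - i) : ℝ) : ℂ) :=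
        iteratedDeriv_ofReal_rpow α i ξ₁ hξpos
      rw [this, norm_mul]
      rw [Complex.norm_real, Complex.norm_real, Real.norm_eq_abs, Real.norm_eq_abs]
      rw [_root_.abs_of_nonneg (Real.rpow_nonneg hξpos.le _)]
    -- B factor bound
    have hBfact : ∀ i : ℕ, ‖iteratedFDerivWithin ℝ i B (Ioi (0:ℝ)) ξ₁‖
        ≤ Cp (j + i) * (δ⁻¹)^(k+j+1) * (ξ₁⁻¹)^(k+j+i+1) := by
      intro i
      rw [iteratedFDerivWithin_of_isOpen i isOpen_Ioi hmem,
        norm_iteratedFDeriv_eq_norm_iteratedDeriv]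
      have hBeq : B = fun u : ℝ => iteratedDeriv j F (s * u) := by
        funext u; rw [hBdef]; simp only [mul_comm]
      rw [hBeq]
      simp only [iteratedDeriv_comp_const_smul (smooth_nat (contDiff_iteratedDeriv hFsm j) i) s]
      rw [iteratedDeriv_iteratedDeriv j F i, norm_smul, Real.norm_eq_abs, _root_.abs_pow]
      have hbd := hCp (j+i) (s * ξ₁) (mul_ne_zero hs0 hξpos.ne')
      have habs : |s * ξ₁| = |s| * ξ₁ := by rw [abs_mul, _root_.abs_of_pos hξpos]
      rw [habs] at hbd
      calc |s|^i * ‖iteratedDeriv (j+i) F (s * ξ₁)‖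
          ≤ |s|^i * (Cp (j+i) * ((|s| * ξ₁)⁻¹)^(k+(j+i)+1)) := by
            apply mul_le_mul_of_nonneg_left hbd (pow_nonneg (abs_nonneg s) i)
        _ = Cp (j+i) * ((|s|⁻¹)^(k+j+1) * (ξ₁⁻¹)^(k+j+i+1)) := by
            rw [mul_inv, mul_pow]
            have h1 : (|s|⁻¹)^(k+(j+i)+1) = (|s|⁻¹)^i * (|s|⁻¹)^(k+j+1) := by
              rw [← pow_add]; congr 1; omega
            have h2 : (k+(j+i)+1) = (k+j+i+1) := by omega
            rw [h1, h2]
            have h3 : |s|^i * (|s|⁻¹)^i = 1 := by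
              rw [← mul_pow, mul_inv_cancel₀ (ne_of_gt hspos), one_pow]
            field_simp
            linear_combination Cp (j+i) * h3
        _ ≤ Cp (j+i) * ((δ⁻¹)^(k+j+1) * (ξ₁⁻¹)^(k+j+i+1)) := by
            apply mul_le_mul_of_nonneg_left _ (hCp0 (j+i))
            apply mul_le_mul_of_nonneg_right _ (pow_nonneg (inv_nonneg.mpr hξpos.le) _)
            exact pow_le_pow_left₀ (inv_nonneg.mpr (abs_nonneg s))
              (inv_anti₀ hδ hs) _
        _ = Cp (j+i) * (δ⁻¹)^(k+j+1) * (ξ₁⁻¹)^(k+j+i+1) := by ring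
    -- exponent combination
    have hexp : ∀ i : ℕ, i ≤ n → ξ₁ ^ (α - i) * (ξ₁⁻¹)^(k+j+(n-i)+1) = ξ₁ ^ (m - k - n) := by
      intro i hin
      have h1 : ((ξ₁:ℝ)⁻¹)^(k+j+(n-i)+1) = ξ₁ ^ (-((k+j+(n-i)+1 : ℕ) : ℝ)) := by
        rw [Real.rpow_neg hξpos.le, Real.rpow_natCast, inv_pow]
      rw [h1, ← Real.rpow_add hξpos]
      congr 1
      push_cast [Nat.cast_sub hin]
      rw [hα]
      ring
    -- final chain
    calc ‖iteratedDeriv n (fun u => A u * B u) ξ₁‖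
        = ‖iteratedFDerivWithin ℝ n (fun u => A u * B u) (Ioi (0:ℝ)) ξ₁‖ := by
          rw [← norm_iteratedFDeriv_eq_norm_iteratedDeriv,
            iteratedFDerivWithin_of_isOpen n isOpen_Ioi hmem]
      _ ≤ ∑ i ∈ Finset.range (n+1), (n.choose i : ℝ)
            * ‖iteratedFDerivWithin ℝ i A (Ioi (0:ℝ)) ξ₁‖
            * ‖iteratedFDerivWithin ℝ (n-i) B (Ioi (0:ℝ)) ξ₁‖ :=
          norm_iteratedFDerivWithin_mul_le hAcd hBcd (uniqueDiffOn_Ioi 0) hmem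
            (by exact_mod_cast le_top)
      _ ≤ ∑ i ∈ Finset.range (n+1), ((n.choose i : ℝ) * K i * (Cp (j + (n - i)) * (δ⁻¹)^(k+j+1)))
            * ξ₁ ^ (m - k - n) := by
          apply Finset.sum_le_sum
          intro i hi
          have hin : i ≤ n := Nat.lt_succ_iff.mp (Finset.mem_range.mp hi)
          rw [hAfact i]
          calc (n.choose i : ℝ) * (K i * ξ₁ ^ (α - i)) * ‖iteratedFDerivWithin ℝ (n-i) B (Ioi (0:ℝ)) ξ₁‖
              ≤ (n.choose i : ℝ) * (K i * ξ₁ ^ (α - i))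
                * (Cp (j + (n-i)) * (δ⁻¹)^(k+j+1) * (ξ₁⁻¹)^(k+j+(n-i)+1)) := by
                apply mul_le_mul_of_nonneg_left (hBfact (n-i))
                have : (0:ℝ) ≤ K i := abs_nonneg _
                positivity
            _ = ((n.choose i : ℝ) * K i * (Cp (j + (n-i)) * (δ⁻¹)^(k+j+1)))
                * (ξ₁ ^ (α - i) * (ξ₁⁻¹)^(k+j+(n-i)+1)) := by ring
            _ = _ := by rw [hexp i hin]
      _ = _ := by rw [← Finset.sum_mul]
end
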